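/- Let c be a fixed class and x, x⁺, x⁻ i.i.d. draws from D_c. For the hinge loss ℓ(v) = max(0, 1−v), the quantity E[ℓ(f(x)ᵀ(f(x⁺) − f(x⁻)))] − 1 is at most √2 · √(‖Σ(f,c)‖₂) · E_{x∼D_c}[‖f(x)‖], where Σ(f,c) is the covariance matrix of f(x) for x ∼ D_c and ‖·‖₂ is the spectral norm. -/

import Mathlib

open MeasureTheory
open scoped RealInnerProductSpace BigOperators

-- L¹ ≤ L² on a probability measure
lemma l1_le_l2_aux {α : Type*} [MeasurableSpace α] (μ : Measure α) [IsProbabilityMeasure μ]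
    (h : α → ℝ) (h1 : Integrable h μ) (h2 : Integrable (fun y => h y ^ 2) μ) :
    ∫ y, |h y| ∂μ ≤ Real.sqrt (∫ y, h y ^ 2 ∂μ) := by
  set a := ∫ y, |h y| ∂μ with ha
  have hann : 0 ≤ a := integral_nonneg fun y => abs_nonneg _
  have key : a ^ 2 ≤ ∫ y, h y ^ 2 ∂μ := by
    have hexp : ∀ y, (|h y| - a) ^ 2 = h y ^ 2 - (2 * a) * |h y| + a ^ 2 := by
      intro y; rw [sub_sq, sq_abs]; ring
    have hnn : (0:ℝ) ≤ ∫ y, (|h y| - a) ^ 2 ∂μ := integral_nonneg fun y => sq_nonneg _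
    have : ∫ y, (|h y| - a) ^ 2 ∂μ = (∫ y, h y ^ 2 ∂μ) - a ^ 2 := by
      simp_rw [hexp]
      have i1 : Integrable (fun y => h y ^ 2 - 2 * a * |h y|) μ :=
        h2.sub (h1.abs.const_mul _)
      rw [integral_add i1 (integrable_const _), integral_sub h2 (h1.abs.const_mul _),
        MeasureTheory.integral_const_mul, integral_const]
      simp [← ha]
      ring
    linarith [this ▸ hnn]
  exact (Real.le_sqrt hann (le_trans (sq_nonneg a) key)).mpr key

lemma hinge_double_aux {X : Type*} [MeasurableSpace X] (μ : Measure X) [IsProbabilityMeasure μ]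
    (g : X → ℝ) (hg : Measurable g) (R : ℝ) (hb : ∀ x, |g x| ≤ R) :
    ∫ xp, ∫ xm, max (1 - (g xp - g xm)) 0 ∂μ ∂μ
      ≤ 1 + Real.sqrt (2 * ((∫ y, g y ^ 2 ∂μ) - (∫ y, g y ∂μ) ^ 2)) := by
  set c := ∫ y, g y ∂μ with hc
  set s := ∫ y, g y ^ 2 ∂μ with hs
  have ig : Integrable g μ :=
    (integrable_const R).mono' hg.aestronglyMeasurable
      (Filter.Eventually.of_forall fun x => by simpa [Real.norm_eq_abs] using hb x)
  have ig2 : Integrable (fun y => g y ^ 2) μ :=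
    (integrable_const (R ^ 2)).mono' ((hg.pow_const 2).aestronglyMeasurable)
      (Filter.Eventually.of_forall fun x => by
        simp only [Real.norm_eq_abs, abs_pow]
        exact pow_le_pow_left₀ (abs_nonneg _) (hb x) 2)
  -- the product function
  set H : X × X → ℝ := fun p => g p.1 - g p.2 with hH
  have hHm : Measurable H := (hg.comp measurable_fst).sub (hg.comp measurable_snd)
  have hHb : ∀ p, |H p| ≤ 2 * R := fun p => by
    calc |g p.1 - g p.2| ≤ |g p.1| + |g p.2| := abs_sub _ _
    _ ≤ 2 * R := by linarith [hb p.1, hb p.2]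
  have iHabs : Integrable (fun p => |H p|) (μ.prod μ) :=
    (integrable_const (2 * R)).mono' hHm.abs.aestronglyMeasurable
      (Filter.Eventually.of_forall fun p => by
        simpa [Real.norm_eq_abs, abs_abs] using hHb p)
  have iH2 : Integrable (fun p => H p ^ 2) (μ.prod μ) :=
    (integrable_const ((2 * R) ^ 2)).mono' ((hHm.pow_const 2).aestronglyMeasurable)
      (Filter.Eventually.of_forall fun p => by
        simp only [Real.norm_eq_abs, abs_pow]
        exact pow_le_pow_left₀ (abs_nonneg _) (hHb p) 2)
  -- step 1: pointwise bound of the inner integral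
  have step1 : ∀ xp, ∫ xm, max (1 - (g xp - g xm)) 0 ∂μ
      ≤ 1 + ∫ xm, |g xp - g xm| ∂μ := by
    intro xp
    have imax : Integrable (fun xm => max (1 - (g xp - g xm)) 0) μ :=
      (integrable_const (1 + 2 * R)).mono'
        (((measurable_const.sub (measurable_const.sub hg)).max measurable_const).aestronglyMeasurable)
        (Filter.Eventually.of_forall fun xm => by
          have hR : (0:ℝ) ≤ R := le_trans (abs_nonneg _) (hb xp)
          obtain ⟨h1a, h1b⟩ := abs_le.mp (hb xp)
          obtain ⟨h2a, h2b⟩ := abs_le.mp (hb xm)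
          rw [Real.norm_eq_abs, abs_of_nonneg (le_max_right _ _)]
          exact max_le (by linarith) (by linarith))
    have iabs : Integrable (fun xm => |g xp - g xm|) μ :=
      (integrable_const (2 * R)).mono' ((measurable_const.sub hg).abs.aestronglyMeasurable)
        (Filter.Eventually.of_forall fun xm => by
          rw [Real.norm_eq_abs, abs_abs]
          calc |g xp - g xm| ≤ |g xp| + |g xm| := abs_sub _ _
          _ ≤ 2 * R := by linarith [hb xp, hb xm])
    calc ∫ xm, max (1 - (g xp - g xm)) 0 ∂μ
        ≤ ∫ xm, 1 + |g xp - g xm| ∂μ := by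
          refine integral_mono imax ((integrable_const 1).add iabs) fun xm => ?_
          refine max_le ?_ (by positivity)
          linarith [neg_abs_le (g xp - g xm)]
      _ = 1 + ∫ xm, |g xp - g xm| ∂μ := by
          rw [integral_add (integrable_const 1) iabs, integral_const]; simp
  -- step 2: bound the outer integral
  have hinner_meas : StronglyMeasurable (fun xp => ∫ xm, |g xp - g xm| ∂μ) :=
    hHm.abs.stronglyMeasurable.integral_prod_right'
  have hinner_int : Integrable (fun xp => ∫ xm, |g xp - g xm| ∂μ) μ :=
    (integrable_const (2 * R)).mono' hinner_meas.aestronglyMeasurable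
      (Filter.Eventually.of_forall fun xp => by
        rw [Real.norm_eq_abs, abs_of_nonneg (integral_nonneg fun _ => abs_nonneg _)]
        calc ∫ xm, |g xp - g xm| ∂μ ≤ ∫ _xm, 2 * R ∂μ := by
              refine integral_mono ?_ (integrable_const _) fun xm => hHb (xp, xm)
              exact (integrable_const (2 * R)).mono'
                ((measurable_const.sub hg).abs.aestronglyMeasurable)
                (Filter.Eventually.of_forall fun xm => by
                  rw [Real.norm_eq_abs, abs_abs]; exact hHb (xp, xm))
          _ = 2 * R := by simp)
  have step2 : ∫ xp, ∫ xm, max (1 - (g xp - g xm)) 0 ∂μ ∂μ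
      ≤ 1 + ∫ xp, ∫ xm, |g xp - g xm| ∂μ ∂μ := by
    calc ∫ xp, ∫ xm, max (1 - (g xp - g xm)) 0 ∂μ ∂μ
        ≤ ∫ xp, (1 + ∫ xm, |g xp - g xm| ∂μ) ∂μ := by
          refine integral_mono_of_nonneg
            (Filter.Eventually.of_forall fun xp => integral_nonneg fun xm => le_max_right _ _)
            ((integrable_const 1).add hinner_int)
            (Filter.Eventually.of_forall step1)
      _ = 1 + ∫ xp, ∫ xm, |g xp - g xm| ∂μ ∂μ := by
          rw [integral_add (integrable_const 1) hinner_int, integral_const]; simp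
  -- step 3: Cauchy-Schwarz on the product
  have step3 : ∫ xp, ∫ xm, |g xp - g xm| ∂μ ∂μ
      ≤ Real.sqrt (∫ p, H p ^ 2 ∂(μ.prod μ)) := by
    have := l1_le_l2_aux (μ.prod μ) H
      ((integrable_const (2 * R)).mono' hHm.aestronglyMeasurable
        (Filter.Eventually.of_forall fun p => by simpa [Real.norm_eq_abs] using hHb p)) iH2
    calc ∫ xp, ∫ xm, |g xp - g xm| ∂μ ∂μ = ∫ p, |H p| ∂(μ.prod μ) :=
          (integral_prod _ iHabs).symm
      _ ≤ Real.sqrt (∫ p, H p ^ 2 ∂(μ.prod μ)) := this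
  -- step 4: compute the second moment of the difference
  have step4 : ∫ p, H p ^ 2 ∂(μ.prod μ) = 2 * (s - c ^ 2) := by
    rw [integral_prod _ iH2]
    have inner_eq : ∀ xp, ∫ xm, (g xp - g xm) ^ 2 ∂μ = g xp ^ 2 - 2 * c * g xp + s := by
      intro xp
      have hrw : ∀ xm, (g xp - g xm) ^ 2 = g xp ^ 2 - (2 * g xp) * g xm + g xm ^ 2 := by
        intro xm; ring
      simp_rw [hrw]
      have i1 : Integrable (fun xm => g xp ^ 2 - (2 * g xp) * g xm) μ :=
        (integrable_const _).sub (ig.const_mul _)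
      rw [integral_add i1 ig2, integral_sub (integrable_const _) (ig.const_mul _),
        MeasureTheory.integral_const_mul, integral_const]
      simp [← hc, ← hs]; ring
    simp_rw [hH, inner_eq]
    have i1 : Integrable (fun xp => g xp ^ 2 - 2 * c * g xp) μ :=
      ig2.sub (ig.const_mul _)
    rw [integral_add i1 (integrable_const _), integral_sub ig2 (ig.const_mul _),
      MeasureTheory.integral_const_mul, integral_const]
    simp [← hc, ← hs]; ring
  calc ∫ xp, ∫ xm, max (1 - (g xp - g xm)) 0 ∂μ ∂μ
      ≤ 1 + ∫ xp, ∫ xm, |g xp - g xm| ∂μ ∂μ := step2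
    _ ≤ 1 + Real.sqrt (∫ p, H p ^ 2 ∂(μ.prod μ)) := by linarith [step3]
    _ = 1 + Real.sqrt (2 * (s - c ^ 2)) := by rw [step4]

lemma abs_coord_le_norm {d : ℕ} (x : EuclideanSpace ℝ (Fin d)) (i : Fin d) : |x i| ≤ ‖x‖ := by
  rw [EuclideanSpace.norm_eq]
  calc |x i| = Real.sqrt (‖x i‖ ^ 2) := by
        rw [Real.sqrt_sq_eq_abs, Real.norm_eq_abs, abs_abs]
    _ ≤ Real.sqrt (∑ j, ‖x j‖ ^ 2) := by
        refine Real.sqrt_le_sqrt ?_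
        exact Finset.single_le_sum (f := fun j => ‖x j‖ ^ 2)
          (fun j _ => by positivity) (Finset.mem_univ i)

lemma variance_le_aux {X : Type*} [MeasurableSpace X] {d : ℕ}
    (Dc : Measure X) [IsProbabilityMeasure Dc]
    (f : X → EuclideanSpace ℝ (Fin d)) (hfm : Measurable f)
    (R : ℝ) (hfb : ∀ x, ‖f x‖ ≤ R)
    (m : EuclideanSpace ℝ (Fin d)) (hm : m = ∫ x, f x ∂Dc)
    (S : Matrix (Fin d) (Fin d) ℝ)
    (hS : ∀ i j, S i j = ∫ x, (f x i - m i) * (f x j - m j) ∂Dc)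
    (v : EuclideanSpace ℝ (Fin d)) :
    (∫ y, ⟪v, f y⟫ ^ 2 ∂Dc) - (∫ y, ⟪v, f y⟫ ∂Dc) ^ 2
      ≤ ‖Matrix.toEuclideanCLM (𝕜 := ℝ) S‖ * ‖v‖ ^ 2 := by
  set A := Matrix.toEuclideanCLM (𝕜 := ℝ) S with hA
  set g : X → ℝ := fun y => ⟪v, f y⟫ with hg
  have hgm : Measurable g := Measurable.inner measurable_const hfm
  have hgb : ∀ y, |g y| ≤ ‖v‖ * R := fun y => by
    calc |g y| ≤ ‖v‖ * ‖f y‖ := abs_real_inner_le_norm v (f y)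
      _ ≤ ‖v‖ * R := by
          exact mul_le_mul_of_nonneg_left (hfb y) (norm_nonneg v)
  have iF : Integrable f Dc :=
    (integrable_const R).mono' hfm.aestronglyMeasurable
      (Filter.Eventually.of_forall fun x => hfb x)
  have ig : Integrable g Dc :=
    (integrable_const (‖v‖ * R)).mono' hgm.aestronglyMeasurable
      (Filter.Eventually.of_forall fun x => by simpa [Real.norm_eq_abs] using hgb x)
  have ig2 : Integrable (fun y => g y ^ 2) Dc :=
    (integrable_const ((‖v‖ * R) ^ 2)).mono' ((hgm.pow_const 2).aestronglyMeasurable)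
      (Filter.Eventually.of_forall fun x => by
        simp only [Real.norm_eq_abs, abs_pow]
        exact pow_le_pow_left₀ (abs_nonneg _) (hgb x) 2)
  -- the mean of g is ⟪v, m⟫
  have hcm : ∫ y, g y ∂Dc = ⟪v, m⟫ := by
    rw [hm]; exact integral_inner iF v
  set c : ℝ := ⟪v, m⟫ with hc
  -- expand the variance
  have expand : (∫ y, g y ^ 2 ∂Dc) - (∫ y, g y ∂Dc) ^ 2 = ∫ y, (g y - c) ^ 2 ∂Dc := by
    have hrw : ∀ y, (g y - c) ^ 2 = g y ^ 2 - (2 * c) * g y + c ^ 2 := fun y => by ring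
    simp_rw [hrw]
    have i1 : Integrable (fun y => g y ^ 2 - (2 * c) * g y) Dc := ig2.sub (ig.const_mul _)
    rw [integral_add i1 (integrable_const _), integral_sub ig2 (ig.const_mul _),
      MeasureTheory.integral_const_mul, integral_const, hcm]
    simp; ring
  -- rewrite (g y - c) as a coordinate sum
  have hgc : ∀ y, g y - c = ∑ i, v i * (f y i - m i) := by
    intro y
    simp only [hg, hc, PiLp.inner_apply, RCLike.inner_apply, conj_trivial, mul_sub,
      ← Finset.sum_sub_distrib]
    exact Finset.sum_congr rfl fun i _ => by ring
  have hmb : ‖m‖ ≤ R := by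
    rw [hm]
    calc ‖∫ x, f x ∂Dc‖ ≤ ∫ x, ‖f x‖ ∂Dc := norm_integral_le_integral_norm f
      _ ≤ ∫ _x, R ∂Dc := integral_mono iF.norm (integrable_const R) fun x => hfb x
      _ = R := by simp
  -- integrability of the coordinate products
  have hcoord : ∀ i : Fin d, Measurable (fun y => f y i) := fun i =>
    ((measurable_pi_apply i).comp (WithLp.measurable_ofLp 2 _)).comp hfm
  have iterm : ∀ i j : Fin d,
      Integrable (fun y => (f y i - m i) * (f y j - m j)) Dc := by
    intro i j
    refine (integrable_const ((R + R) * (R + R))).mono'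
      (((((hcoord i).sub measurable_const)).mul
        (((hcoord j).sub measurable_const))).aestronglyMeasurable)
      (Filter.Eventually.of_forall fun y => ?_)
    rw [Real.norm_eq_abs, abs_mul]
    have b1 : |f y i - m i| ≤ R + R := by
      calc |f y i - m i| ≤ |f y i| + |m i| := abs_sub _ _
        _ ≤ R + R := add_le_add ((abs_coord_le_norm (f y) i).trans (hfb y))
            ((abs_coord_le_norm m i).trans hmb)
    have b2 : |f y j - m j| ≤ R + R := by
      calc |f y j - m j| ≤ |f y j| + |m j| := abs_sub _ _
        _ ≤ R + R := add_le_add ((abs_coord_le_norm (f y) j).trans (hfb y))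
            ((abs_coord_le_norm m j).trans hmb)
    have h0 : (0:ℝ) ≤ |f y i - m i| := abs_nonneg _
    exact mul_le_mul b1 b2 (abs_nonneg _) (by linarith [abs_nonneg (f y i - m i), b1])
  -- compute the variance as the quadratic form
  have quad : ∫ y, (g y - c) ^ 2 ∂Dc = ∑ i, ∑ j, v i * v j * S i j := by
    have hsq : ∀ y, (g y - c) ^ 2
        = ∑ i, ∑ j, (v i * v j) * ((f y i - m i) * (f y j - m j)) := by
      intro y
      rw [sq, hgc y, Finset.sum_mul_sum]
      refine Finset.sum_congr rfl fun i _ => Finset.sum_congr rfl fun j _ => by ring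
    simp_rw [hsq]
    rw [integral_finset_sum _ (fun i _ => integrable_finset_sum _
      (fun j _ => (iterm i j).const_mul _))]
    refine Finset.sum_congr rfl fun i _ => ?_
    rw [integral_finset_sum _ (fun j _ => (iterm i j).const_mul _)]
    refine Finset.sum_congr rfl fun j _ => ?_
    rw [MeasureTheory.integral_const_mul, ← hS i j]
  -- the quadratic form equals ⟪v, A v⟫
  have hAv : ∀ i, (A v) i = ∑ j, S i j * v j := by
    intro i
    have h := congrFun (Matrix.ofLp_toEuclideanCLM (𝕜 := ℝ) (n := Fin d) S v) i
    rw [hA, h]; simp [Matrix.mulVec, dotProduct]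
  have hquadA : ∑ i, ∑ j, v i * v j * S i j = ⟪v, A v⟫ := by
    rw [PiLp.inner_apply]
    simp only [RCLike.inner_apply, conj_trivial]
    refine Finset.sum_congr rfl fun i _ => ?_
    rw [hAv i, Finset.sum_mul]
    exact Finset.sum_congr rfl fun j _ => by ring
  -- conclude
  have hfinal : ⟪v, A v⟫ ≤ ‖A‖ * ‖v‖ ^ 2 := by
    calc ⟪v, A v⟫ ≤ ‖v‖ * ‖A v‖ := real_inner_le_norm v (A v)
      _ ≤ ‖v‖ * (‖A‖ * ‖v‖) := mul_le_mul_of_nonneg_left (A.le_opNorm v) (norm_nonneg v)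
      _ = ‖A‖ * ‖v‖ ^ 2 := by ring
  calc (∫ y, g y ^ 2 ∂Dc) - (∫ y, g y ∂Dc) ^ 2 = ∫ y, (g y - c) ^ 2 ∂Dc := expand
    _ = ∑ i, ∑ j, v i * v j * S i j := quad
    _ = ⟪v, A v⟫ := hquadA
    _ ≤ ‖A‖ * ‖v‖ ^ 2 := hfinal

/-- Class collision lemma (binary hinge case): for `x, x⁺, x⁻` i.i.d. from one class
distribution, the excess hinge contrastive loss is controlled by the intraclass
deviation `√‖Σ(f,c)‖₂ · E‖f(x)‖`. -/
theorem class_collision_hinge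
    {X : Type*} [MeasurableSpace X] {d : ℕ}
    (Dc : Measure X) [IsProbabilityMeasure Dc]
    (f : X → EuclideanSpace ℝ (Fin d)) (hfm : Measurable f)
    (R : ℝ) (hfb : ∀ x, ‖f x‖ ≤ R)
    (m : EuclideanSpace ℝ (Fin d)) (hm : m = ∫ x, f x ∂Dc)
    (S : Matrix (Fin d) (Fin d) ℝ)
    (hS : ∀ i j, S i j = ∫ x, (f x i - m i) * (f x j - m j) ∂Dc) :
    (∫ x, ∫ xp, ∫ xm, max (1 - ⟪f x, f xp - f xm⟫) 0 ∂Dc ∂Dc ∂Dc) - 1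
    ≤ Real.sqrt 2 * Real.sqrt ‖Matrix.toEuclideanCLM (𝕜 := ℝ) S‖ *
        ∫ x, ‖f x‖ ∂Dc := by
  set A := Matrix.toEuclideanCLM (𝕜 := ℝ) S with hA
  set C : ℝ := Real.sqrt 2 * Real.sqrt ‖A‖ with hC
  have hCnn : 0 ≤ C := mul_nonneg (Real.sqrt_nonneg _) (Real.sqrt_nonneg _)
  have iF : Integrable f Dc :=
    (integrable_const R).mono' hfm.aestronglyMeasurable
      (Filter.Eventually.of_forall fun x => hfb x)
  -- per-x bound
  have per_x : ∀ x, ∫ xp, ∫ xm, max (1 - ⟪f x, f xp - f xm⟫) 0 ∂Dc ∂Dc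
      ≤ 1 + C * ‖f x‖ := by
    intro x
    set v := f x with hv
    have hgm : Measurable (fun y => ⟪v, f y⟫) := Measurable.inner measurable_const hfm
    have hgb : ∀ y, |⟪v, f y⟫| ≤ ‖v‖ * R := fun y => by
      calc |⟪v, f y⟫| ≤ ‖v‖ * ‖f y‖ := abs_real_inner_le_norm v (f y)
        _ ≤ ‖v‖ * R := mul_le_mul_of_nonneg_left (hfb y) (norm_nonneg v)
    have key := hinge_double_aux Dc (fun y => ⟪v, f y⟫) hgm (‖v‖ * R) hgb
    have hvar := variance_le_aux Dc f hfm R hfb m hm S hS v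
    have hsqrt : Real.sqrt (2 * ((∫ y, ⟪v, f y⟫ ^ 2 ∂Dc) - (∫ y, ⟪v, f y⟫ ∂Dc) ^ 2))
        ≤ C * ‖v‖ := by
      calc Real.sqrt (2 * ((∫ y, ⟪v, f y⟫ ^ 2 ∂Dc) - (∫ y, ⟪v, f y⟫ ∂Dc) ^ 2))
          ≤ Real.sqrt (2 * (‖A‖ * ‖v‖ ^ 2)) := by
            refine Real.sqrt_le_sqrt ?_
            nlinarith [hvar]
        _ = C * ‖v‖ := by
            rw [hC, Real.sqrt_mul (by norm_num : (0:ℝ) ≤ 2),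
              Real.sqrt_mul (norm_nonneg A), Real.sqrt_sq (norm_nonneg v)]
            ring
    calc ∫ xp, ∫ xm, max (1 - ⟪f x, f xp - f xm⟫) 0 ∂Dc ∂Dc
        = ∫ xp, ∫ xm, max (1 - (⟪v, f xp⟫ - ⟪v, f xm⟫)) 0 ∂Dc ∂Dc := by
          simp_rw [hv, inner_sub_right]
      _ ≤ 1 + Real.sqrt (2 * ((∫ y, ⟪v, f y⟫ ^ 2 ∂Dc) - (∫ y, ⟪v, f y⟫ ∂Dc) ^ 2)) := key
      _ ≤ 1 + C * ‖v‖ := by linarith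
  -- integrate the per-x bound
  have hmono : ∫ x, ∫ xp, ∫ xm, max (1 - ⟪f x, f xp - f xm⟫) 0 ∂Dc ∂Dc ∂Dc
      ≤ ∫ x, (1 + C * ‖f x‖) ∂Dc := by
    refine integral_mono_of_nonneg
      (Filter.Eventually.of_forall fun x =>
        integral_nonneg fun xp => integral_nonneg fun xm => le_max_right _ _)
      ((integrable_const 1).add (iF.norm.const_mul C))
      (Filter.Eventually.of_forall per_x)
  have heq : ∫ x, (1 + C * ‖f x‖) ∂Dc = 1 + C * ∫ x, ‖f x‖ ∂Dc := by
    rw [integral_add (integrable_const 1) (iF.norm.const_mul C),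
      MeasureTheory.integral_const_mul, integral_const]
    simp
  have := hmono.trans_eq heq
  linarith [this]
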